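/- Let G be a finite abelian group of order v. Suppose {D_0,D_1,D_2,D_3} is a symmetric difference family of type H in G satisfying (d3), and {S_0,S_1} is a difference family of type H_2* in G. Define in G × ℤ/3ℤ: B_0 = D_0×{1} ∪ (G∖D_2)×{2} ∪ S_0×{0}, B_1 = D_3×{1} ∪ (G∖D_1)×{2} ∪ S_1×{0}, B_2 = (G∖D_0)×{1} ∪ D_2×{2} ∪ S_0×{0}, B_3 = (G∖D_3)×{1} ∪ D_1×{2} ∪ S_1×{0}. Then {B_0,B_1,B_2,B_3} is a difference family of type H_4* in G × ℤ/3ℤ. -/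

import Mathlib

open Finset

noncomputable section

variable {G : Type*}

/-- The element of the group ring `ℤ[G]` associated to a finite subset `D ⊆ G`. -/
def grp [AddCommGroup G] [DecidableEq G] (D : Finset G) : AddMonoidAlgebra ℤ G :=
  ∑ x ∈ D, AddMonoidAlgebra.single x 1

/-- `D^{(-1)} = {-x : x ∈ D}`. -/
def negSet [AddCommGroup G] [DecidableEq G] (D : Finset G) : Finset G :=
  D.image (fun x => -x)

/-- A subset is symmetric if `D = -D`. -/
def IsSymmetric [AddCommGroup G] [DecidableEq G] (D : Finset G) : Prop :=
  negSet D = D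

/-- `G* = G \ {0}` as a finset. -/
def Gstar (G : Type*) [AddCommGroup G] [Fintype G] [DecidableEq G] : Finset G :=
  Finset.univ \ {0}

/-- A difference family of type `H`: four blocks with `λ = Σ|D_i| - |G|`. -/
def IsTypeH [AddCommGroup G] [Fintype G] [DecidableEq G] (D : Fin 4 → Finset G) : Prop :=
  ∑ i, grp (D i) * grp (negSet (D i)) =
    ((∑ i, ((D i).card : ℤ)) - (Fintype.card G : ℤ)) • grp (Finset.univ : Finset G)
      + (Fintype.card G : ℤ) • AddMonoidAlgebra.single (0 : G) (1 : ℤ)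

/-- A difference family of type `H_4^*`: four blocks with `λ = Σ|B_i| - (|G|+1)`. -/
def IsTypeH4star [AddCommGroup G] [Fintype G] [DecidableEq G] (B : Fin 4 → Finset G) : Prop :=
  ∑ i, grp (B i) * grp (negSet (B i)) =
    ((∑ i, ((B i).card : ℤ)) - ((Fintype.card G : ℤ) + 1)) • grp (Finset.univ : Finset G)
      + ((Fintype.card G : ℤ) + 1) • AddMonoidAlgebra.single (0 : G) (1 : ℤ)

/-- A difference family of type `H_2^*`: two blocks with `λ = Σ|S_i| - (|G|+1)/2`. -/
def IsTypeH2star [AddCommGroup G] [Fintype G] [DecidableEq G] (S : Fin 2 → Finset G) : Prop :=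
  ∑ i, grp (S i) * grp (negSet (S i)) =
    ((∑ i, ((S i).card : ℤ)) - ((Fintype.card G : ℤ) + 1) / 2) • grp (Finset.univ : Finset G)
      + (((Fintype.card G : ℤ) + 1) / 2) • AddMonoidAlgebra.single (0 : G) (1 : ℤ)

/-- Condition (d3). -/
def CondD3 [AddCommGroup G] [Fintype G] [DecidableEq G] (D : Fin 4 → Finset G) : Prop :=
  grp (D 0) * grp (negSet (D 2)) + grp (D 2) * grp (negSet (D 0))
    + grp (D 1) * grp (negSet (D 3)) + grp (D 3) * grp (negSet (D 1)) =
    ((∑ i, ((D i).card : ℤ)) - (Fintype.card G : ℤ) + 1) • grp (Finset.univ : Finset G)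

/-- Condition (c1). -/
def CondC1 [AddCommGroup G] [Fintype G] [DecidableEq G] (S : Fin 4 → Finset G) : Prop :=
  grp (S 0) * grp (negSet (S 2)) + grp (S 2) * grp (negSet (S 0))
    + grp (S 1) * grp (negSet (S 3)) + grp (S 3) * grp (negSet (S 1)) =
    ((∑ i, ((S i).card : ℤ)) - (Fintype.card G : ℤ)) • grp (Finset.univ : Finset G)

/-- Condition (d2). -/
def CondD2 [AddCommGroup G] [Fintype G] [DecidableEq G] (D : Fin 4 → Finset G) : Prop :=
  ∃ E₀ E₁ : Finset G, E₀ ⊆ Gstar G ∧ E₁ ⊆ Gstar G ∧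
    grp (D 0) + grp (D 1) - grp (D 2) - grp (D 3) = grp E₀ - grp (Gstar G \ E₀) ∧
    grp (D 0) + grp (D 3) - grp (D 1) - grp (D 2) = grp E₁ - grp (Gstar G \ E₁) ∧
    IsTypeH4star ![E₀, E₁, Gstar G \ E₀, Gstar G \ E₁]

/-- A building family: eight symmetric, pairwise disjoint subsets partitioning `G*`,
satisfying (a3) and (a4). -/
def IsBuildingFamily [AddCommGroup G] [Fintype G] [DecidableEq G] (A : Fin 8 → Finset G) : Prop :=
  (∀ i, IsSymmetric (A i)) ∧
  (∀ i j, i ≠ j → Disjoint (A i) (A j)) ∧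
  (Finset.univ.biUnion A = Gstar G) ∧
  IsTypeH4star ![A 0 ∪ A 1 ∪ A 6 ∪ A 7, A 2 ∪ A 3 ∪ A 4 ∪ A 5,
    A 0 ∪ A 3 ∪ A 5 ∪ A 6, A 1 ∪ A 2 ∪ A 4 ∪ A 7] ∧
  (∑ i, grp (A i) * grp (A i)) - (∑ i, grp (A i) * grp (A (i + 4))) =
    ((Fintype.card G : ℤ) - 1) • AddMonoidAlgebra.single (0 : G) (1 : ℤ)
      + ((grp (A 0) + grp (A 1) + grp (A 2) + grp (A 3))
        - (grp (A 4) + grp (A 5) + grp (A 6) + grp (A 7)))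

end

section Aux
open Finset
noncomputable section
set_option linter.unusedSectionVars false
variable {G : Type*}
variable [AddCommGroup G] [DecidableEq G]

lemma grp_union {A B : Finset G} (h : Disjoint A B) : grp (A ∪ B) = grp A + grp B := by
  simpa [grp] using Finset.sum_union h

lemma grp_sdiff {A B : Finset G} (h : B ⊆ A) : grp (A \ B) = grp A - grp B := by
  have := Finset.sum_sdiff (f := fun x : G => AddMonoidAlgebra.single x (1:ℤ)) h
  simp only [grp]
  exact eq_sub_of_add_eq this

lemma card_negSet (A : Finset G) : (negSet A).card = A.card :=
  Finset.card_image_of_injective _ neg_injective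

lemma negSet_idem (A : Finset G) : negSet (negSet A) = A := by
  simp [negSet, Finset.image_image, Function.comp]

lemma mem_negSet {A : Finset G} {x : G} : x ∈ negSet A ↔ -x ∈ A := by
  simp [negSet]
  constructor
  · rintro ⟨a, ha, rfl⟩; simpa using ha
  · intro h; exact ⟨-x, h, by simp⟩

lemma negSet_sdiff (A B : Finset G) : negSet (A \ B) = negSet A \ negSet B := by
  ext x; simp [mem_negSet, Finset.mem_sdiff]

lemma negSet_union (A B : Finset G) : negSet (A ∪ B) = negSet A ∪ negSet B := by
  ext x; simp [mem_negSet]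

lemma negSet_univ [Fintype G] : negSet (Finset.univ : Finset G) = Finset.univ := by
  ext x; simp [mem_negSet]

-- key: grp A * grp univ = card A • grp univ
lemma grp_mul_univ [Fintype G] (A : Finset G) :
    grp A * grp (Finset.univ : Finset G) = (A.card : ℤ) • grp (Finset.univ : Finset G) := by
  rw [grp, Finset.sum_mul]
  have h : ∀ a : G, AddMonoidAlgebra.single a (1:ℤ) * grp (Finset.univ : Finset G)
      = grp (Finset.univ : Finset G) := by
    intro a
    rw [grp, Finset.mul_sum]
    refine Fintype.sum_equiv (Equiv.addLeft a) _ _ ?_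
    intro x
    simp [AddMonoidAlgebra.single_mul_single]
  simp [h, Finset.sum_const]

-- product machinery
variable [Fintype G]

def phi3 (G : Type*) [AddCommGroup G] [DecidableEq G] :
    AddMonoidAlgebra ℤ G →+* AddMonoidAlgebra ℤ (G × ZMod 3) :=
  AddMonoidAlgebra.mapDomainRingHom ℤ (AddMonoidHom.inl G (ZMod 3))

def e3 (G : Type*) [AddCommGroup G] [DecidableEq G] (c : ZMod 3) :
    AddMonoidAlgebra ℤ (G × ZMod 3) :=
  AddMonoidAlgebra.single ((0 : G), c) (1 : ℤ)

lemma e3_mul (c d : ZMod 3) : e3 G c * e3 G d = e3 G (c + d) := by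
  simp [e3, AddMonoidAlgebra.single_mul_single]

lemma e3_zero : e3 G 0 = 1 := by
  simp only [e3, AddMonoidAlgebra.one_def]
  rfl

lemma grp_prod_single (A : Finset G) (c : ZMod 3) :
    grp (A ×ˢ ({c} : Finset (ZMod 3))) = phi3 G (grp A) * e3 G c := by
  rw [grp, grp, map_sum, Finset.sum_mul, Finset.sum_product]
  refine Finset.sum_congr rfl fun a _ => ?_
  simp [phi3, e3, AddMonoidAlgebra.single_mul_single, Finsupp.mapDomain_single]

lemma negSet_prod (A : Finset G) (c : ZMod 3) :
    negSet (A ×ˢ ({c} : Finset (ZMod 3))) = negSet A ×ˢ ({-c} : Finset (ZMod 3)) := by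
  ext ⟨x, y⟩
  rw [mem_negSet, Finset.mem_product, Finset.mem_product, mem_negSet]
  simp [Prod.ext_iff, neg_eq_iff_eq_neg]

lemma univ_prod_decomp :
    (Finset.univ : Finset (G × ZMod 3)) =
      (Finset.univ : Finset G) ×ˢ ({0} : Finset (ZMod 3)) ∪
      (Finset.univ : Finset G) ×ˢ ({1} : Finset (ZMod 3)) ∪
      (Finset.univ : Finset G) ×ˢ ({2} : Finset (ZMod 3)) := by
  ext ⟨x, y⟩
  simp [Finset.mem_product]
  revert y; decide

-- augmentation
def eps (G : Type*) [AddCommGroup G] [DecidableEq G] : AddMonoidAlgebra ℤ G →+* ℤ :=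
  AddMonoidAlgebra.liftNCRingHom (RingHom.id ℤ) (1 : Multiplicative G →* ℤ)
    (fun _ _ => Commute.all _ _)

lemma eps_single (a : G) (r : ℤ) : eps G (AddMonoidAlgebra.single a r) = r := by
  simp [eps, AddMonoidAlgebra.liftNCRingHom, AddMonoidAlgebra.liftNC_single]

lemma eps_grp (A : Finset G) : eps G (grp A) = A.card := by
  rw [grp, map_sum]
  simp [eps_single]

-- coefficient at zero
lemma coeff0_grp_mul (A B : Finset G) :
    (grp A * grp (negSet B)).coeff 0 = ((A ∩ B).card : ℤ) := by
  rw [grp, grp, Finset.sum_mul_sum]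
  have h1 : ∀ a b : G, (AddMonoidAlgebra.single a (1:ℤ) * AddMonoidAlgebra.single b (1:ℤ)).coeff 0
      = if b = -a then (1:ℤ) else 0 := by
    intro a b
    rw [AddMonoidAlgebra.single_mul_single, one_mul]
    rw [AddMonoidAlgebra.coeff_single, Finsupp.single_apply]
    congr 1
    simp only [eq_iff_iff]
    constructor
    · intro h; exact eq_neg_of_add_eq_zero_right h
    · rintro rfl; exact add_neg_cancel a
  rw [AddMonoidAlgebra.coeff_sum, Finsupp.finset_sum_apply]
  have h2 : ∀ a ∈ A, (∑ b ∈ negSet B, AddMonoidAlgebra.single a (1:ℤ)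
      * AddMonoidAlgebra.single b (1:ℤ)).coeff 0 = if a ∈ B then (1:ℤ) else 0 := by
    intro a _
    rw [AddMonoidAlgebra.coeff_sum, Finsupp.finset_sum_apply]
    rw [Finset.sum_congr rfl (fun b _ => h1 a b)]
    rw [Finset.sum_ite_eq' (negSet B) (-a) (fun _ => (1:ℤ))]
    congr 1
    simp [mem_negSet]
  rw [Finset.sum_congr rfl h2, Finset.sum_ite_mem, Finset.sum_const]
  simp [Finset.inter_comm]

lemma coeff0_grp_mul' (A B : Finset G) :
    (grp A * grp B).coeff 0 = ((A ∩ negSet B).card : ℤ) := by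
  conv_lhs => rw [show grp B = grp (negSet (negSet B)) from by rw [negSet_idem]]
  exact coeff0_grp_mul A (negSet B)

lemma apply0_add (x y : AddMonoidAlgebra ℤ G) : (x + y).coeff 0 = x.coeff 0 + y.coeff 0 := rfl

lemma apply0_smul (c : ℤ) (x : AddMonoidAlgebra ℤ G) : (c • x).coeff 0 = c * x.coeff 0 := rfl

lemma grp_apply_zero (A : Finset G) : (grp A).coeff 0 = if (0:G) ∈ A then (1:ℤ) else 0 := by
  rw [grp, AddMonoidAlgebra.coeff_sum, Finsupp.finset_sum_apply]
  have : ∀ a ∈ A, (AddMonoidAlgebra.single a (1:ℤ)).coeff 0 = if a = 0 then (1:ℤ) else 0 := by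
    intro a _; rw [AddMonoidAlgebra.coeff_single, Finsupp.single_apply]
  rw [Finset.sum_congr rfl this, Finset.sum_ite_eq' A (0:G) (fun _ => (1:ℤ))]

lemma disj_prod {c d : ZMod 3} (h : c ≠ d) (A B : Finset G) :
    Disjoint (A ×ˢ ({c} : Finset (ZMod 3))) (B ×ˢ ({d} : Finset (ZMod 3))) := by
  rw [Finset.disjoint_left]
  rintro ⟨x, y⟩ hx hy
  simp only [Finset.mem_product, Finset.mem_singleton] at hx hy
  exact h (hx.2 ▸ hy.2 ▸ rfl)


lemma main_ring {R : Type*} [CommRing R]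
    (X0 X1 X2 X3 S0 S1 T0 T1 g E1 E2 : R) (n0 n1 n2 n3 m0 m1 v lam : R)
    (r1 : X0*X0+X1*X1+X2*X2+X3*X3 = (n0+n1+n2+n3-v)*g + v)
    (r2 : X0*X2+X2*X0+X1*X3+X3*X1 = (n0+n1+n2+n3-v+1)*g)
    (r3 : S0*T0+S1*T1 = (m0+m1-lam)*g + lam)
    (rl : 2*lam = v+1)
    (r40 : X0*g = n0*g) (r41 : X1*g = n1*g) (r42 : X2*g = n2*g) (r43 : X3*g = n3*g)
    (r5S0 : S0*g = m0*g) (r5S1 : S1*g = m1*g) (r5T0 : T0*g = m0*g) (r5T1 : T1*g = m1*g)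
    (r6 : g*g = v*g) (r7a : E1*E2 = 1) (r7b : E1*E1 = E2) (r7c : E2*E2 = E1) :
    (X0*E1 + (g - X2)*E2 + S0) * (X0*E2 + (g - X2)*E1 + T0)
    + (X3*E1 + (g - X1)*E2 + S1) * (X3*E2 + (g - X1)*E1 + T1)
    + ((g - X0)*E1 + X2*E2 + S0) * ((g - X0)*E2 + X2*E1 + T0)
    + ((g - X3)*E1 + X1*E2 + S1) * ((g - X3)*E2 + X1*E1 + T1)
    = (v + 2*(m0+m1) - 1)*(g*(1+E1+E2)) + (3*v+1) := by
  linear_combination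
    (2*(X0*X0+X1*X1+X2*X2+X3*X3) + 4*g*g - 2*g*(X0+X1+X2+X3)) * r7a
    + (g*(X0+X1+X2+X3) - (X0*X2+X2*X0+X1*X3+X3*X1)) * (r7b + r7c)
    + 2*r1 + 4*r6
    + (E1+E2-2) * (r40+r41+r42+r43)
    - (E1+E2) * r2
    + (E1+E2) * (r5S0+r5S1+r5T0+r5T1)
    + 2*r3
    + (1-g) * rl

end
end Aux

/-- product construction with `ℤ/3ℤ` from a symmetric type-`H` family
satisfying (d3) and a type-`H_2^*` family. -/
theorem product_construction_Z3 {G : Type*} [AddCommGroup G] [Fintype G] [DecidableEq G]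
    (D : Fin 4 → Finset G) (S : Fin 2 → Finset G)
    (hsym : ∀ i, IsSymmetric (D i)) (hH : IsTypeH D) (hd3 : CondD3 D)
    (hS : IsTypeH2star S) :
    IsTypeH4star (G := G × ZMod 3)
      ![(D 0) ×ˢ ({1} : Finset (ZMod 3)) ∪ ((Finset.univ : Finset G) \ D 2) ×ˢ {2}
          ∪ (S 0) ×ˢ {0},
        (D 3) ×ˢ ({1} : Finset (ZMod 3)) ∪ ((Finset.univ : Finset G) \ D 1) ×ˢ {2}
          ∪ (S 1) ×ˢ {0},
        ((Finset.univ : Finset G) \ D 0) ×ˢ ({1} : Finset (ZMod 3)) ∪ (D 2) ×ˢ {2}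
          ∪ (S 0) ×ˢ {0},
        ((Finset.univ : Finset G) \ D 3) ×ˢ ({1} : Finset (ZMod 3)) ∪ (D 1) ×ˢ {2}
          ∪ (S 1) ×ˢ {0}] := by
  classical
  have hs : ∀ i, negSet (D i) = D i := fun i => hsym i
  set φ := phi3 G with hφ
  set E1 := e3 G 1 with hE1
  set E2 := e3 G 2 with hE2
  -- Step 1 : v is odd
  unfold IsTypeH at hH
  unfold CondD3 at hd3
  unfold IsTypeH2star at hS
  simp only [hs] at hH hd3
  simp only [Fin.sum_univ_four] at hH hd3
  simp only [Fin.sum_univ_two] at hS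
  have hHe := congrArg (eps G) hH
  simp only [map_add, map_mul, map_zsmul, eps_grp, eps_single, smul_eq_mul,
    Finset.card_univ] at hHe
  have hd30 := congrArg (fun f : AddMonoidAlgebra ℤ G => f.coeff 0) hd3
  simp only [apply0_add, apply0_smul, coeff0_grp_mul', grp_apply_zero,
    Finset.mem_univ, if_true, mul_one, hs] at hd30
  rw [show D 2 ∩ D 0 = D 0 ∩ D 2 from Finset.inter_comm _ _,
      show D 3 ∩ D 1 = D 1 ∩ D 3 from Finset.inter_comm _ _] at hd30
  have hlam : 2 * (((Fintype.card G : ℤ) + 1) / 2) = (Fintype.card G : ℤ) + 1 := by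
    obtain ⟨c0, hc0⟩ := Int.even_mul_succ_self ((D 0).card : ℤ)
    obtain ⟨c1, hc1⟩ := Int.even_mul_succ_self ((D 1).card : ℤ)
    obtain ⟨c2, hc2⟩ := Int.even_mul_succ_self ((D 2).card : ℤ)
    obtain ⟨c3, hc3⟩ := Int.even_mul_succ_self ((D 3).card : ℤ)
    have hNeven : ((D 0).card : ℤ) + (D 1).card + (D 2).card + (D 3).card
        = 2 * ((c0 + c1 + c2 + c3)
            - (Fintype.card G : ℤ) * (((D 0 ∩ D 2).card : ℤ) + ((D 1 ∩ D 3).card : ℤ))) := by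
      have hsq : ((D 0).card : ℤ) * (D 0).card + ((D 1).card : ℤ) * (D 1).card
          + ((D 2).card : ℤ) * (D 2).card + ((D 3).card : ℤ) * (D 3).card
          = (Fintype.card G : ℤ)
            * (2 * (((D 0 ∩ D 2).card : ℤ) + ((D 1 ∩ D 3).card : ℤ))) := by
        rw [hHe]
        have : ((D 0).card : ℤ) + (D 1).card + (D 2).card + (D 3).card
            - (Fintype.card G : ℤ) + 1
            = 2 * (((D 0 ∩ D 2).card : ℤ) + ((D 1 ∩ D 3).card : ℤ)) := by
          rw [← hd30]; ring
        linear_combination (Fintype.card G : ℤ) * this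
      linear_combination hc0 + hc1 + hc2 + hc3 - hsq
    omega
  -- Step 2 : map hypotheses into the group ring of `G × ZMod 3`
  rw [← AddMonoidAlgebra.one_def] at hH hS
  have hH' := congrArg φ hH
  have hd3' := congrArg φ hd3
  have hS' := congrArg φ hS
  simp only [map_add, map_mul, map_zsmul, map_one, zsmul_eq_mul, map_intCast] at hH' hd3' hS'
  have r4 : ∀ A : Finset G, φ (grp A) * φ (grp (Finset.univ : Finset G))
      = ((A.card : ℤ) : AddMonoidAlgebra ℤ (G × ZMod 3)) * φ (grp (Finset.univ : Finset G)) := by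
    intro A
    have h := congrArg φ (grp_mul_univ A)
    simpa only [map_mul, map_zsmul, zsmul_eq_mul, map_intCast] using h
  have r6 := r4 Finset.univ
  rw [Finset.card_univ] at r6
  have r40 := r4 (D 0); have r41 := r4 (D 1); have r42 := r4 (D 2); have r43 := r4 (D 3)
  have r5S0 := r4 (S 0); have r5S1 := r4 (S 1)
  have r5T0 := r4 (negSet (S 0)); have r5T1 := r4 (negSet (S 1))
  rw [card_negSet] at r5T0 r5T1
  have r7a : E1 * E2 = 1 := by
    rw [hE1, hE2, e3_mul, show (1 + 2 : ZMod 3) = 0 by decide, e3_zero]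
  have r7b : E1 * E1 = E2 := by
    rw [hE1, hE2, e3_mul, show (1 + 1 : ZMod 3) = 2 by decide]
  have r7c : E2 * E2 = E1 := by
    rw [hE1, hE2, e3_mul, show (2 + 2 : ZMod 3) = 1 by decide]
  have rl' := congrArg (Int.cast : ℤ → AddMonoidAlgebra ℤ (G × ZMod 3)) hlam
  push_cast at rl'
  -- block computations
  have hblk : ∀ A B C : Finset G,
      grp (A ×ˢ ({1} : Finset (ZMod 3)) ∪ B ×ˢ {2} ∪ C ×ˢ {0})
        = φ (grp A) * E1 + φ (grp B) * E2 + φ (grp C) := by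
    intro A B C
    rw [grp_union (Finset.disjoint_union_left.mpr
        ⟨disj_prod (by decide) _ _, disj_prod (by decide) _ _⟩),
      grp_union (disj_prod (by decide) _ _),
      grp_prod_single, grp_prod_single, grp_prod_single, e3_zero, mul_one, hE1, hE2, hφ]
  have hblk2 : ∀ A B C : Finset G,
      grp (A ×ˢ ({2} : Finset (ZMod 3)) ∪ B ×ˢ {1} ∪ C ×ˢ {0})
        = φ (grp A) * E2 + φ (grp B) * E1 + φ (grp C) := by
    intro A B C
    rw [grp_union (Finset.disjoint_union_left.mpr
        ⟨disj_prod (by decide) _ _, disj_prod (by decide) _ _⟩),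
      grp_union (disj_prod (by decide) _ _),
      grp_prod_single, grp_prod_single, grp_prod_single, e3_zero, mul_one, hE1, hE2, hφ]
  have hneg : ∀ A B C : Finset G,
      negSet (A ×ˢ ({1} : Finset (ZMod 3)) ∪ B ×ˢ {2} ∪ C ×ˢ {0})
        = negSet A ×ˢ ({2} : Finset (ZMod 3)) ∪ negSet B ×ˢ {1} ∪ negSet C ×ˢ {0} := by
    intro A B C
    rw [negSet_union, negSet_union, negSet_prod, negSet_prod, negSet_prod,
      show (-(1 : ZMod 3)) = 2 by decide, show (-(2 : ZMod 3)) = 1 by decide, neg_zero]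
  have hsd : ∀ X : Finset G, grp ((Finset.univ : Finset G) \ X)
      = grp (Finset.univ : Finset G) - grp X := fun X => grp_sdiff (Finset.subset_univ X)
  have hnegsd : ∀ i, negSet ((Finset.univ : Finset G) \ D i)
      = (Finset.univ : Finset G) \ D i := by
    intro i; rw [negSet_sdiff, negSet_univ, hs]
  have hcard3 : ∀ A B C : Finset G,
      (((A ×ˢ ({1} : Finset (ZMod 3)) ∪ B ×ˢ {2} ∪ C ×ˢ {0})).card : ℤ)
        = (A.card : ℤ) + B.card + C.card := by
    intro A B C
    rw [Finset.card_union_of_disjoint (Finset.disjoint_union_left.mpr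
        ⟨disj_prod (by decide) _ _, disj_prod (by decide) _ _⟩),
      Finset.card_union_of_disjoint (disj_prod (by decide) _ _),
      Finset.card_product, Finset.card_product, Finset.card_product]
    simp
  have hcardsd : ∀ X : Finset G, (((Finset.univ : Finset G) \ X).card : ℤ)
      = (Fintype.card G : ℤ) - X.card := by
    intro X
    rw [Finset.card_sdiff_of_subset (Finset.subset_univ X), Finset.card_univ,
      Nat.cast_sub (Finset.card_le_univ X)]
  have hU : grp (Finset.univ : Finset (G × ZMod 3))
      = φ (grp (Finset.univ : Finset G)) * (1 + E1 + E2) := by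
    rw [univ_prod_decomp,
      grp_union (Finset.disjoint_union_left.mpr
        ⟨disj_prod (by decide) _ _, disj_prod (by decide) _ _⟩),
      grp_union (disj_prod (by decide) _ _),
      grp_prod_single, grp_prod_single, grp_prod_single, e3_zero, mul_one, hE1, hE2, hφ]
    ring
  have hone : (AddMonoidAlgebra.single (0 : G × ZMod 3) (1 : ℤ)) = 1 :=
    AddMonoidAlgebra.one_def.symm
  have hvcard : ((Fintype.card (G × ZMod 3) : ℤ)) = 3 * (Fintype.card G : ℤ) := by
    rw [Fintype.card_prod, ZMod.card]
    push_cast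
    ring
  -- rewrite the goal
  unfold IsTypeH4star
  simp only [Fin.sum_univ_four, Matrix.cons_val_zero, Matrix.cons_val_one, Matrix.head_cons,
    Matrix.cons_val_two, Matrix.tail_cons, Matrix.cons_val_three]
  rw [hneg, hneg, hneg, hneg]
  simp only [hs, hnegsd]
  simp only [hblk, hblk2, hsd, map_sub, hU, hone, hvcard, hcard3, hcardsd, zsmul_eq_mul]
  push_cast
  push_cast at hH' hd3' hS' rl' r6 r40 r41 r42 r43 r5S0 r5S1 r5T0 r5T1
  set x0 := φ (grp (D 0))
  set x1 := φ (grp (D 1))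
  set x2 := φ (grp (D 2))
  set x3 := φ (grp (D 3))
  set gu := φ (grp (Finset.univ : Finset G))
  linear_combination
    (2*(x0*x0+x1*x1+x2*x2+x3*x3) + 4*gu*gu - 2*gu*(x0+x1+x2+x3)) * r7a
    + (gu*(x0+x1+x2+x3) - (x0*x2+x2*x0+x1*x3+x3*x1)) * (r7b + r7c)
    + 2*hH' + 4*r6 + (E1+E2-2) * (r40+r41+r42+r43)
    - (E1+E2) * hd3'
    + (E1+E2) * (r5S0+r5S1+r5T0+r5T1)
    + 2*hS' + (1-gu) * rl'
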